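/- Let H be a hypergraph with an ordering v_1,…,v_n of its vertices, let i ∈ {0,…,n−1}, let T* be a minimal transversal of H_i, and let X ⊆ V_{i+1} \ T* be such that T* ∪ X is a minimal transversal of H_{i+1}. Then |X| ≤ |inc_{i+1}(v_{i+1})|. In particular, if the ordering v_1,…,v_n witnesses that H has weak degeneracy at most d, then |X| ≤ d. -/

import Mathlib

/-- `T` is a transversal of the induced hypergraph `H[S]`, where the ambient
hypergraph has edge family `E`: `T ⊆ S` and `T` meets every edge of `E` that is
contained in `S`. -/
def IsTransversal {α : Type*} [DecidableEq α]
    (E : Finset (Finset α)) (S T : Finset α) : Prop :=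
  T ⊆ S ∧ ∀ e ∈ E, e ⊆ S → (e ∩ T).Nonempty

/-- `T` is a minimal transversal of `H[S]`: it is a transversal and no proper
subset of it is a transversal. -/
def IsMinTransversal {α : Type*} [DecidableEq α]
    (E : Finset (Finset α)) (S T : Finset α) : Prop :=
  IsTransversal E S T ∧ ∀ T' ⊂ T, ¬ IsTransversal E S T'

/-- Let `H` be a hypergraph with an ordering `v 0, …, v (n-1)` of its vertices,
let `i ∈ {0,…,n-1}`, let `T*` be a minimal transversal of `H_i = H[{v 0,…,v (i-1)}]`,
and let `X ⊆ V_{i+1} \ T*` (with `V_{i+1} = {v 0,…,v i}`) be such that `T* ∪ X` is a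
minimal transversal of `H_{i+1} = H[V_{i+1}]`. Then `|X| ≤ |inc_{i+1}(v_{i+1})|`
(the number of edges of `H_{i+1}` containing `v i`); in particular, if the ordering
witnesses that `H` has weak degeneracy at most `d`, then `|X| ≤ d`. -/
theorem card_extension_le_incidence
    {α : Type*} [DecidableEq α] {n : ℕ} (V : Finset α) (E : Finset (Finset α))
    (hE : ∀ e ∈ E, e ⊆ V)
    (v : Fin n → α) (hinj : Function.Injective v) (hV : V = Finset.univ.image v)
    (i : Fin n) (Tstar X : Finset α) (d : ℕ)
    (hT : IsMinTransversal E ((Finset.Iio i).image v) Tstar)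
    (hX : X ⊆ (Finset.Iic i).image v \ Tstar)
    (hTX : IsMinTransversal E ((Finset.Iic i).image v) (Tstar ∪ X)) :
    X.card ≤ (E.filter (fun e => e ⊆ (Finset.Iic i).image v ∧ v i ∈ e)).card ∧
    ((∀ j : Fin n,
        (E.filter (fun e => e ⊆ (Finset.Iic j).image v ∧ v j ∈ e)).card ≤ d) →
      X.card ≤ d) := by
  classical
  set S1 := (Finset.Iic i).image v with hS1
  set S0 := (Finset.Iio i).image v with hS0
  have hS01 : S0 ⊆ S1 := Finset.image_subset_image (by
    intro j hj
    simp only [Finset.mem_Iio] at hj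
    simp only [Finset.mem_Iic]
    exact le_of_lt hj)
  have hTsub : Tstar ⊆ S1 := hT.1.1.trans hS01
  have hXsub : X ⊆ S1 := fun x hx => (Finset.mem_sdiff.mp (hX hx)).1
  have hXnT : ∀ x ∈ X, x ∉ Tstar := fun x hx => (Finset.mem_sdiff.mp (hX hx)).2
  have key : ∀ x ∈ X, ∃ e, e ∈ E ∧ e ⊆ S1 ∧ v i ∈ e ∧ x ∈ e ∧
      e ∩ (Tstar ∪ X) ⊆ {x} := by
    intro x hx
    have hxTX : x ∈ Tstar ∪ X := Finset.mem_union_right _ hx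
    have hssub : (Tstar ∪ X).erase x ⊂ Tstar ∪ X := Finset.erase_ssubset hxTX
    have hnot := hTX.2 _ hssub
    have hsub' : (Tstar ∪ X).erase x ⊆ S1 :=
      (Finset.erase_subset _ _).trans (Finset.union_subset hTsub hXsub)
    rw [IsTransversal] at hnot
    push_neg at hnot
    obtain ⟨e, heE, heS, hemp⟩ := hnot hsub'
    have hsub : e ∩ (Tstar ∪ X) ⊆ {x} := by
      intro y hy
      rw [Finset.mem_inter] at hy
      by_contra hyx
      rw [Finset.mem_singleton] at hyx
      have : y ∈ e ∩ (Tstar ∪ X).erase x :=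
        Finset.mem_inter.mpr ⟨hy.1, Finset.mem_erase.mpr ⟨hyx, hy.2⟩⟩
      rw [hemp] at this
      exact absurd this (Finset.notMem_empty y)
    have hne : (e ∩ (Tstar ∪ X)).Nonempty := hTX.1.2 e heE heS
    obtain ⟨y, hy⟩ := hne
    have hyx : y = x := Finset.mem_singleton.mp (hsub hy)
    subst hyx
    have hxe : y ∈ e := (Finset.mem_inter.mp hy).1
    have hvi : v i ∈ e := by
      by_contra hvi
      have heS0 : e ⊆ S0 := by
        intro z hz
        have := heS hz
        rw [hS1, Finset.mem_image] at this
        obtain ⟨j, hj, hjz⟩ := this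
        rw [Finset.mem_Iic] at hj
        rcases lt_or_eq_of_le hj with hjlt | hjeq
        · rw [hS0, Finset.mem_image]
          exact ⟨j, Finset.mem_Iio.mpr hjlt, hjz⟩
        · subst hjeq; rw [hjz] at hvi; exact absurd hz hvi
      obtain ⟨z, hz⟩ := hT.1.2 e heE heS0
      rw [Finset.mem_inter] at hz
      have : z ∈ ({y} : Finset α) := hsub (Finset.mem_inter.mpr
        ⟨hz.1, Finset.mem_union_left _ hz.2⟩)
      rw [Finset.mem_singleton] at this
      subst this
      exact hXnT z hx hz.2
    exact ⟨e, heE, heS, hvi, hxe, hsub⟩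
  choose f hf1 hf2 hf3 hf4 hf5 using key
  have main : X.card ≤ (E.filter (fun e => e ⊆ S1 ∧ v i ∈ e)).card := by
    apply Finset.card_le_card_of_injOn (fun x => if hx : x ∈ X then f x hx else ∅)
    · intro x hx
      simp only [Finset.mem_coe] at hx ⊢
      simp only [hx, dif_pos]
      rw [Finset.mem_filter]
      exact ⟨hf1 x hx, hf2 x hx, hf3 x hx⟩
    · intro x hx y hy hxy
      simp only [Finset.mem_coe] at hx hy
      simp only [hx, hy, dif_pos] at hxy
      have : x ∈ f y hy ∩ (Tstar ∪ X) := by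
        rw [← hxy]
        exact Finset.mem_inter.mpr ⟨hf4 x hx, Finset.mem_union_right _ hx⟩
      exact Finset.mem_singleton.mp (hf5 y hy this)
  exact ⟨main, fun h => main.trans (h i)⟩
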